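/- Let f: ℝ₊ → ℝ₊ be a log-concave function and define Ψ_f(p) = (∫₀^∞ r^p f(r) dr) / Γ(p+1). Then Ψ_f is log-concave on [0, ∞). -/

import Mathlib

open MeasureTheory Real Set


lemma exp_rpow' (z w : ℝ) : (Real.exp z) ^ w = Real.exp (z * w) := by
  rw [Real.rpow_def_of_pos (Real.exp_pos z), Real.log_exp]

lemma expIntegrable {s d : ℝ} (hs : 0 ≤ s) (hd : 0 < d) :
    IntegrableOn (fun r : ℝ => r ^ s * Real.exp (-(d * r))) (Set.Ioi 0) := by
  have h := integrableOn_rpow_mul_exp_neg_mul_rpow (p := 1) (s := s) (b := d)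
    (by linarith) one_pos hd
  refine h.congr_fun (fun x hx => ?_) measurableSet_Ioi
  beta_reduce
  rw [Real.rpow_one]
  ring_nf

lemma expIntegral {s d : ℝ} (hs : 0 ≤ s) (hd : 0 < d) :
    ∫ r in Set.Ioi (0:ℝ), r ^ s * Real.exp (-(d * r))
      = (1/d) ^ (s+1) * Real.Gamma (s+1) := by
  have h := Real.integral_rpow_mul_exp_neg_mul_Ioi (a := s+1) (r := d) (by linarith) hd
  simpa using h

section chord
variable {u v t θ : ℝ}

lemma rpow_comb (hu : 0 ≤ u) (hv : 0 ≤ v) {a b : ℝ} (ha : 0 ≤ a) (hb : 0 ≤ b)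
    (hab : a + b = 1) (hθ0 : 0 ≤ θ) (hθ1 : θ ≤ 1) :
    a * u ^ θ + b * v ^ θ ≤ (a * u + b * v) ^ θ := by
  have := (Real.concaveOn_rpow hθ0 hθ1).2 (mem_Ici.mpr hu) (mem_Ici.mpr hv) ha hb hab
  simpa [smul_eq_mul] using this

lemma chord_le (hu : 0 ≤ u) (huv : u < v) (ht1 : u ≤ t) (ht2 : t ≤ v)
    (hθ0 : 0 < θ) (hθ1 : θ < 1) :
    u ^ θ + (v ^ θ - u ^ θ) / (v - u) * (t - u) ≤ t ^ θ := by
  have hvu : (0:ℝ) < v - u := by linarith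
  have key := rpow_comb hu (le_trans hu huv.le) (a := (v - t)/(v-u)) (b := (t - u)/(v-u))
    (div_nonneg (by linarith) (by linarith)) (div_nonneg (by linarith) (by linarith))
    (by field_simp; ring) hθ0.le hθ1.le
  have hc : (v - t)/(v-u) * u + (t - u)/(v-u) * v = t := by field_simp; ring
  rw [hc] at key
  have h2 : u ^ θ + (v ^ θ - u ^ θ) / (v - u) * (t - u)
      = (v - t)/(v-u) * u ^ θ + (t - u)/(v-u) * v ^ θ := by field_simp; ring
  rw [h2]; exact key

lemma le_chord_right (hu : 0 ≤ u) (huv : u < v) (hvt : v ≤ t)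
    (hθ0 : 0 < θ) (hθ1 : θ < 1) :
    t ^ θ ≤ u ^ θ + (v ^ θ - u ^ θ) / (v - u) * (t - u) := by
  rcases eq_or_lt_of_le hvt with rfl | hvt
  · have hvu : v - u ≠ 0 := by linarith
    field_simp
    linarith
  have htu : (0:ℝ) < t - u := by linarith
  have hvu : (0:ℝ) < v - u := by linarith
  have key := rpow_comb hu (le_trans hu (by linarith : u ≤ t)) (a := (t - v)/(t-u))
    (b := (v - u)/(t-u)) (div_nonneg (by linarith) (by linarith))
    (div_nonneg (by linarith) (by linarith)) (by field_simp; ring) hθ0.le hθ1.le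
  have hc : (t - v)/(t-u) * u + (v - u)/(t-u) * t = v := by field_simp; ring
  rw [hc] at key
  rw [div_mul_eq_mul_div, div_mul_eq_mul_div, ← add_div, div_le_iff₀ htu] at key
  rw [div_mul_eq_mul_div, ← sub_le_iff_le_add', le_div_iff₀ hvu]
  nlinarith [key]

lemma le_chord_left (hu : 0 ≤ u) (huv : u < v) (ht0 : 0 ≤ t) (htu : t ≤ u)
    (hθ0 : 0 < θ) (hθ1 : θ < 1) :
    t ^ θ ≤ u ^ θ + (v ^ θ - u ^ θ) / (v - u) * (t - u) := by
  rcases eq_or_lt_of_le htu with rfl | htu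
  · have hvu : v - t ≠ 0 := by linarith
    simp
  have hvt : (0:ℝ) < v - t := by linarith
  have hvu : (0:ℝ) < v - u := by linarith
  have key := rpow_comb ht0 (le_trans hu huv.le) (a := (v - u)/(v-t))
    (b := (u - t)/(v-t)) (div_nonneg (by linarith) (by linarith))
    (div_nonneg (by linarith) (by linarith)) (by field_simp; ring) hθ0.le hθ1.le
  have hc : (v - u)/(v-t) * t + (u - t)/(v-t) * v = u := by field_simp; ring
  rw [hc] at key
  rw [div_mul_eq_mul_div, div_mul_eq_mul_div, ← add_div, div_le_iff₀ hvt] at key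
  rw [div_mul_eq_mul_div, ← sub_le_iff_le_add', le_div_iff₀ hvu]
  nlinarith [key]

end chord


lemma interval_lemma (f : ℝ → ℝ)
    (hlc : ∀ x y : ℝ, 0 ≤ x → 0 ≤ y → ∀ l ∈ Set.Ioo (0 : ℝ) 1,
      f x ^ (1 - l) * f y ^ l ≤ f ((1 - l) * x + l * y))
    {c d : ℝ} (hc : 0 < c) (hd : 0 < d) {x y r : ℝ}
    (hx0 : 0 < x) (hy0 : 0 < y)
    (hx : c * Real.exp (-(d*x)) < f x) (hy : c * Real.exp (-(d*y)) < f y)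
    (hxr : x ≤ r) (hry : r ≤ y) : c * Real.exp (-(d*r)) < f r := by
  rcases eq_or_lt_of_le hxr with rfl | hxr
  · exact hx
  rcases eq_or_lt_of_le hry with rfl | hry
  · exact hy
  have hxy : x < y := lt_trans hxr hry
  set μ := (r - x) / (y - x) with hμdef
  have hyx : (0:ℝ) < y - x := by linarith
  have hμ0 : 0 < μ := div_pos (by linarith) hyx
  have hμ1 : μ < 1 := (div_lt_one hyx).mpr (by linarith)
  have hrc : (1 - μ) * x + μ * y = r := by rw [hμdef]; field_simp; ring
  have h1 := hlc x y hx0.le hy0.le μ ⟨hμ0, hμ1⟩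
  rw [hrc] at h1
  have hgx : 0 < c * Real.exp (-(d*x)) := by positivity
  have hgy : 0 < c * Real.exp (-(d*y)) := by positivity
  have h2 : (c * Real.exp (-(d*x))) ^ (1-μ) * (c * Real.exp (-(d*y))) ^ μ
      < f x ^ (1-μ) * f y ^ μ := by
    apply mul_lt_mul''
    · exact Real.rpow_lt_rpow hgx.le hx (by linarith)
    · exact Real.rpow_lt_rpow hgy.le hy hμ0
    · exact Real.rpow_nonneg hgx.le _
    · exact Real.rpow_nonneg hgy.le _
  have h3 : (c * Real.exp (-(d*x))) ^ (1-μ) * (c * Real.exp (-(d*y))) ^ μ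
      = c * Real.exp (-(d*r)) := by
    rw [Real.mul_rpow hc.le (Real.exp_pos _).le, Real.mul_rpow hc.le (Real.exp_pos _).le,
      exp_rpow', exp_rpow', mul_mul_mul_comm, ← Real.rpow_add hc, ← Real.exp_add]
    have e1 : (1 - μ) + μ = (1:ℝ) := by ring
    rw [e1, Real.rpow_one]
    congr 1
    rw [← hrc]; ring
  calc c * Real.exp (-(d*r)) = _ := h3.symm
    _ < f x ^ (1-μ) * f y ^ μ := h2
    _ ≤ f r := h1

lemma mid_integrable {f : ℝ → ℝ} (hmeas : Measurable f) (hf0 : ∀ r, 0 ≤ r → 0 ≤ f r)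
    {p q m : ℝ} (hm0 : 0 ≤ m) (hpm : p ≤ m) (hmq : m ≤ q)
    (hfp : IntegrableOn (fun r => r ^ p * f r) (Set.Ioi 0))
    (hfq : IntegrableOn (fun r => r ^ q * f r) (Set.Ioi 0)) :
    IntegrableOn (fun r => r ^ m * f r) (Set.Ioi 0) := by
  refine (hfp.add hfq).mono' ?_ ?_
  · exact (((Real.continuous_rpow_const hm0).measurable).mul hmeas).aestronglyMeasurable
  · filter_upwards [ae_restrict_mem measurableSet_Ioi] with r hr
    have hr0 : (0:ℝ) < r := hr
    have hfr : 0 ≤ f r := hf0 r hr0.le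
    have hnn : 0 ≤ r ^ m * f r := mul_nonneg (Real.rpow_pos_of_pos hr0 m).le hfr
    rw [Real.norm_eq_abs, abs_of_nonneg hnn]
    have hpow : r ^ m ≤ r ^ p + r ^ q := by
      rcases le_total 1 r with h1 | h1
      · have := Real.rpow_le_rpow_of_exponent_le h1 hmq
        have hp' : 0 ≤ r ^ p := (Real.rpow_pos_of_pos hr0 p).le
        linarith
      · have := Real.rpow_le_rpow_of_exponent_ge hr0 h1 hpm
        have hq' : 0 ≤ r ^ q := (Real.rpow_pos_of_pos hr0 q).le
        linarith
    calc r ^ m * f r ≤ (r ^ p + r ^ q) * f r := mul_le_mul_of_nonneg_right hpow hfr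
      _ = r ^ p * f r + r ^ q * f r := by ring

lemma core_finish {f g : ℝ → ℝ} {p q m α β : ℝ}
    (hfp : IntegrableOn (fun r => r ^ p * f r) (Set.Ioi 0))
    (hfq : IntegrableOn (fun r => r ^ q * f r) (Set.Ioi 0))
    (hfm : IntegrableOn (fun r => r ^ m * f r) (Set.Ioi 0))
    (hgp : IntegrableOn (fun r => r ^ p * g r) (Set.Ioi 0))
    (hgq : IntegrableOn (fun r => r ^ q * g r) (Set.Ioi 0))
    (hgm : IntegrableOn (fun r => r ^ m * g r) (Set.Ioi 0))
    (hEp : ∫ r in Set.Ioi (0:ℝ), r ^ p * f r = ∫ r in Set.Ioi (0:ℝ), r ^ p * g r)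
    (hEq : ∫ r in Set.Ioi (0:ℝ), r ^ q * f r = ∫ r in Set.Ioi (0:ℝ), r ^ q * g r)
    (hsign : ∀ r ∈ Set.Ioi (0:ℝ), 0 ≤ (r ^ m - α * r ^ p - β * r ^ q) * (f r - g r)) :
    ∫ r in Set.Ioi (0:ℝ), r ^ m * g r ≤ ∫ r in Set.Ioi (0:ℝ), r ^ m * f r := by
  have h0 : 0 ≤ ∫ r in Set.Ioi (0:ℝ), (r ^ m - α * r ^ p - β * r ^ q) * (f r - g r) :=
    setIntegral_nonneg measurableSet_Ioi hsign
  have hexp : (fun r : ℝ => (r ^ m - α * r ^ p - β * r ^ q) * (f r - g r))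
      = fun r : ℝ => (r ^ m * f r - r ^ m * g r) - α * (r ^ p * f r - r ^ p * g r)
        - β * (r ^ q * f r - r ^ q * g r) := by
    funext r; ring
  rw [hexp] at h0
  have h1 : IntegrableOn (fun r : ℝ => r ^ m * f r - r ^ m * g r) (Set.Ioi 0) := hfm.sub hgm
  have h2 : IntegrableOn (fun r : ℝ => α * (r ^ p * f r - r ^ p * g r)) (Set.Ioi 0) :=
    (hfp.sub hgp).const_mul α
  have h3 : IntegrableOn (fun r : ℝ => β * (r ^ q * f r - r ^ q * g r)) (Set.Ioi 0) :=
    (hfq.sub hgq).const_mul β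
  have h4 : IntegrableOn
      (fun r : ℝ => (r ^ m * f r - r ^ m * g r) - α * (r ^ p * f r - r ^ p * g r))
      (Set.Ioi 0) := h1.sub h2
  rw [integral_sub h4 h3, integral_sub h1 h2, integral_sub hfm hgm, integral_const_mul,
    integral_const_mul, integral_sub hfp hgp, integral_sub hfq hgq, hEp, hEq] at h0
  simp at h0
  linarith

lemma core_finish_ae {f g : ℝ → ℝ} {p m : ℝ}
    (hfp : IntegrableOn (fun r => r ^ p * f r) (Set.Ioi 0))
    (hgp : IntegrableOn (fun r => r ^ p * g r) (Set.Ioi 0))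
    (hEp : ∫ r in Set.Ioi (0:ℝ), r ^ p * f r = ∫ r in Set.Ioi (0:ℝ), r ^ p * g r)
    (hae : ∀ᵐ r ∂(volume.restrict (Set.Ioi 0)), f r ≤ g r) :
    ∫ r in Set.Ioi (0:ℝ), r ^ m * g r ≤ ∫ r in Set.Ioi (0:ℝ), r ^ m * f r := by
  have hnn : 0 ≤ᵐ[volume.restrict (Set.Ioi 0)] fun r => r ^ p * g r - r ^ p * f r := by
    filter_upwards [hae, ae_restrict_mem measurableSet_Ioi] with r h1 h2
    have h3 : (0:ℝ) ≤ r ^ p := (Real.rpow_pos_of_pos h2 p).le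
    have := mul_le_mul_of_nonneg_left h1 h3
    simpa using sub_nonneg.mpr this
  have hz : ∫ r in Set.Ioi (0:ℝ), (r ^ p * g r - r ^ p * f r) = 0 := by
    rw [integral_sub hgp hfp, hEp]; ring
  have hae0 := (integral_eq_zero_iff_of_nonneg_ae hnn (hgp.sub hfp)).mp hz
  have heq : (fun r : ℝ => r ^ m * g r) =ᵐ[volume.restrict (Set.Ioi 0)]
      (fun r => r ^ m * f r) := by
    filter_upwards [hae0, ae_restrict_mem measurableSet_Ioi] with r h1 h2
    have hrp : r ^ p ≠ 0 := ne_of_gt (Real.rpow_pos_of_pos h2 _)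
    have h3 : r ^ p * g r = r ^ p * f r := by
      have : r ^ p * g r - r ^ p * f r = 0 := h1
      linarith
    have h4 : g r = f r := mul_left_cancel₀ hrp h3
    rw [h4]
  exact le_of_eq (integral_congr_ae heq)

theorem key (f : ℝ → ℝ) (hmeas : Measurable f) (hf0 : ∀ r, 0 ≤ r → 0 ≤ f r)
    (hlc : ∀ x y : ℝ, 0 ≤ x → 0 ≤ y → ∀ l ∈ Set.Ioo (0 : ℝ) 1,
      f x ^ (1 - l) * f y ^ l ≤ f ((1 - l) * x + l * y))
    {p q l : ℝ} (hp : 0 ≤ p) (hpq : p < q) (hl0 : 0 < l) (hl1 : l < 1)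
    (hA : 0 < ∫ r in Set.Ioi (0:ℝ), r ^ p * f r)
    (hB : 0 < ∫ r in Set.Ioi (0:ℝ), r ^ q * f r) :
    ((∫ r in Set.Ioi (0 : ℝ), r ^ p * f r) / Real.Gamma (p + 1)) ^ (1 - l) *
        ((∫ r in Set.Ioi (0 : ℝ), r ^ q * f r) / Real.Gamma (q + 1)) ^ l ≤
      (∫ r in Set.Ioi (0 : ℝ), r ^ ((1 - l) * p + l * q) * f r) /
        Real.Gamma ((1 - l) * p + l * q + 1) := by
  have hq : 0 ≤ q := le_trans hp hpq.le
  set m := (1 - l) * p + l * q with hmdef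
  have hpm : p < m := by nlinarith
  have hmq : m < q := by nlinarith
  have hm0 : 0 ≤ m := le_trans hp hpm.le
  have hΓp : 0 < Real.Gamma (p + 1) := Real.Gamma_pos_of_pos (by linarith)
  have hΓq : 0 < Real.Gamma (q + 1) := Real.Gamma_pos_of_pos (by linarith)
  have hΓm : 0 < Real.Gamma (m + 1) := Real.Gamma_pos_of_pos (by linarith)
  -- integrability of f moments
  have hfp : IntegrableOn (fun r : ℝ => r ^ p * f r) (Set.Ioi 0) := by
    by_contra hcon
    rw [MeasureTheory.integral_undef hcon] at hA
    exact lt_irrefl 0 hA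
  have hfq : IntegrableOn (fun r : ℝ => r ^ q * f r) (Set.Ioi 0) := by
    by_contra hcon
    rw [MeasureTheory.integral_undef hcon] at hB
    exact lt_irrefl 0 hB
  have hfm : IntegrableOn (fun r : ℝ => r ^ m * f r) (Set.Ioi 0) :=
    mid_integrable hmeas hf0 hm0 hpm.le hmq.le hfp hfq
  -- the comparison exponential
  set A' := (∫ r in Set.Ioi (0:ℝ), r ^ p * f r) / Real.Gamma (p + 1) with hA'def
  set B' := (∫ r in Set.Ioi (0:ℝ), r ^ q * f r) / Real.Gamma (q + 1) with hB'def
  have hA' : 0 < A' := div_pos hA hΓp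
  have hB' : 0 < B' := div_pos hB hΓq
  set d := (A' / B') ^ ((q - p)⁻¹) with hddef
  have hd : 0 < d := Real.rpow_pos_of_pos (div_pos hA' hB') _
  set c := A' * d ^ (p + 1) with hcdef
  have hc : 0 < c := mul_pos hA' (Real.rpow_pos_of_pos hd _)
  set g : ℝ → ℝ := fun r => c * Real.exp (-(d * r)) with hgdef
  have hgint : ∀ s : ℝ, 0 ≤ s → IntegrableOn (fun r : ℝ => r ^ s * g r) (Set.Ioi 0) :=
    fun s hs => IntegrableOn.congr_fun ((expIntegrable hs hd).const_mul c)
      (fun x _ => by simp only [hgdef]; ring) measurableSet_Ioi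
  have hgval : ∀ s : ℝ, 0 ≤ s →
      ∫ r in Set.Ioi (0:ℝ), r ^ s * g r = c * ((1/d) ^ (s+1) * Real.Gamma (s+1)) := by
    intro s hs
    have he : (fun r : ℝ => r ^ s * g r) = fun r : ℝ => c * (r ^ s * Real.exp (-(d * r))) := by
      funext r; simp only [hgdef]; ring
    rw [he, MeasureTheory.integral_const_mul, expIntegral hs hd]
  -- log identities
  have hlogd : Real.log d = (q - p)⁻¹ * (Real.log A' - Real.log B') := by
    rw [hddef, Real.log_rpow (div_pos hA' hB'), Real.log_div hA'.ne' hB'.ne']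
  have hlogc : Real.log c = Real.log A' + (p + 1) * Real.log d := by
    rw [hcdef, Real.log_mul hA'.ne' (Real.rpow_pos_of_pos hd _).ne',
      Real.log_rpow hd]
  have inj : ∀ {x y : ℝ}, 0 < x → 0 < y → Real.log x = Real.log y → x = y := by
    intro x y hx hy h
    rw [← Real.exp_log hx, ← Real.exp_log hy, h]
  have hqp : q - p ≠ 0 := by linarith
  have hlog1d : Real.log (1/d) = - Real.log d := by rw [one_div, Real.log_inv]
  have hkey1 : c * (1/d) ^ (p + 1) = A' := by
    refine inj (by positivity) hA' ?_
    rw [Real.log_mul hc.ne' (Real.rpow_pos_of_pos (by positivity) _).ne',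
      Real.log_rpow (by positivity), hlog1d, hlogc]
    ring
  have hkey2 : c * (1/d) ^ (q + 1) = B' := by
    refine inj (by positivity) hB' ?_
    rw [Real.log_mul hc.ne' (Real.rpow_pos_of_pos (by positivity) _).ne',
      Real.log_rpow (by positivity), hlog1d, hlogc, hlogd]
    field_simp
    ring
  have hkey3 : c * (1/d) ^ (m + 1) = A' ^ (1 - l) * B' ^ l := by
    refine inj (by positivity) (by positivity) ?_
    rw [Real.log_mul hc.ne' (Real.rpow_pos_of_pos (by positivity) _).ne',
      Real.log_rpow (by positivity), hlog1d, hlogc, hlogd,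
      Real.log_mul (Real.rpow_pos_of_pos hA' _).ne' (Real.rpow_pos_of_pos hB' _).ne',
      Real.log_rpow hA', Real.log_rpow hB', hmdef]
    field_simp
    ring
  -- moment equalities
  have hEp : ∫ r in Set.Ioi (0:ℝ), r ^ p * f r = ∫ r in Set.Ioi (0:ℝ), r ^ p * g r := by
    rw [hgval p hp, ← mul_assoc, hkey1, hA'def]
    field_simp
  have hEq : ∫ r in Set.Ioi (0:ℝ), r ^ q * f r = ∫ r in Set.Ioi (0:ℝ), r ^ q * g r := by
    rw [hgval q hq, ← mul_assoc, hkey2, hB'def]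
    field_simp
  -- interval structure of {f > g}
  set S := {r : ℝ | 0 < r ∧ g r < f r} with hSdef
  have hSsub : ∀ x ∈ S, (0:ℝ) < x := fun x hx => hx.1
  have hSconv : ∀ x ∈ S, ∀ y ∈ S, ∀ r : ℝ, x ≤ r → r ≤ y → r ∈ S := by
    intro x hx y hy r hxr hry
    exact ⟨lt_of_lt_of_le hx.1 hxr,
      interval_lemma f hlc hc hd hx.1 hy.1 hx.2 hy.2 hxr hry⟩
  have hcore : ∫ r in Set.Ioi (0:ℝ), r ^ m * g r ≤ ∫ r in Set.Ioi (0:ℝ), r ^ m * f r := by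
    by_cases hS : S.Nonempty
    · have hbd : BddBelow S := ⟨0, fun x hx => (hSsub x hx).le⟩
      have ha0 : 0 ≤ sInf S := le_csInf hS fun x hx => (hSsub x hx).le
      by_cases hbA : BddAbove S
      · have hab : sInf S ≤ sSup S := csInf_le_csSup hS hbd hbA
        rcases eq_or_lt_of_le hab with heqab | hab
        · -- degenerate: S ⊆ {sInf S}
          refine core_finish_ae (p := p) hfp (hgint p hp) hEp ?_
          have h1 : ∀ᵐ r : ℝ ∂volume, r ≠ sInf S := by
            rw [ae_iff]
            have h2 : {x : ℝ | ¬ x ≠ sInf S} = {sInf S} := by ext x; simp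
            rw [h2]; exact measure_singleton _
          filter_upwards [ae_restrict_of_ae h1, ae_restrict_mem measurableSet_Ioi]
            with r h1 h2
          by_contra hcon
          push_neg at hcon
          have hrS : r ∈ S := ⟨h2, hcon⟩
          have hinf := csInf_le hbd hrS
          have hsup := le_csSup hbA hrS
          exact h1 (le_antisymm (by rw [heqab]; exact hsup) hinf)
        · -- main chord case
          set a := sInf S
          set b := sSup S
          set u := a ^ (q - p) with hudef
          set v := b ^ (q - p) with hvdef
          have hu0 : 0 ≤ u := Real.rpow_nonneg ha0 _
          have huv : u < v := Real.rpow_lt_rpow ha0 hab (by linarith)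
          set β := (v ^ l - u ^ l) / (v - u) with hβdef
          set α := u ^ l - β * u with hαdef
          refine core_finish (α := α) (β := β) hfp hfq hfm (hgint p hp) (hgint q hq)
            (hgint m hm0) hEp hEq ?_
          intro r hr
          have hr0 : (0:ℝ) < r := hr
          set t := r ^ (q - p) with htdef
          have ht0 : 0 < t := Real.rpow_pos_of_pos hr0 _
          have hrm : r ^ m = r ^ p * t ^ l := by
            rw [htdef, ← Real.rpow_mul hr0.le, ← Real.rpow_add hr0]
            congr 1; rw [hmdef]; ring
          have hrq : r ^ q = r ^ p * t := by
            rw [htdef, ← Real.rpow_add hr0]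
            congr 1; ring
          have hfac : r ^ m - α * r ^ p - β * r ^ q
              = r ^ p * (t ^ l - (u ^ l + β * (t - u))) := by
            rw [hrm, hrq, hαdef]; ring
          have hrp : (0:ℝ) < r ^ p := Real.rpow_pos_of_pos hr0 _
          rcases lt_trichotomy (g r) (f r) with hlt | heq | hgt
          · have hrS : r ∈ S := ⟨hr0, hlt⟩
            have har : a ≤ r := csInf_le hbd hrS
            have hrb : r ≤ b := le_csSup hbA hrS
            have hut : u ≤ t := Real.rpow_le_rpow ha0 har (by linarith)
            have htv : t ≤ v := Real.rpow_le_rpow hr0.le hrb (by linarith)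
            have hch := chord_le hu0 huv hut htv hl0 hl1
            rw [hfac]
            refine mul_nonneg (mul_nonneg hrp.le ?_) (by linarith)
            rw [hβdef]
            linarith
          · rw [show f r - g r = 0 by rw [heq]; ring, mul_zero]
          · have hnotin : r ≤ a ∨ b ≤ r := by
              by_contra hcon
              push_neg at hcon
              obtain ⟨x, hxS, hxr⟩ := exists_lt_of_csInf_lt hS hcon.1
              obtain ⟨y, hyS, hry⟩ := exists_lt_of_lt_csSup hS hcon.2
              exact absurd (hSconv x hxS y hyS r hxr.le hry.le).2 (not_lt.mpr hgt.le)
            have hch : t ^ l ≤ u ^ l + (v ^ l - u ^ l)/(v - u) * (t - u) := by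
              rcases hnotin with hra | hbr
              · exact le_chord_left hu0 huv ht0.le
                  (Real.rpow_le_rpow hr0.le hra (by linarith)) hl0 hl1
              · exact le_chord_right hu0 huv
                  (Real.rpow_le_rpow (le_trans ha0 hab.le) hbr (by linarith)) hl0 hl1
            rw [hfac]
            have h2 : t ^ l - (u ^ l + β * (t - u)) ≤ 0 := by rw [hβdef]; linarith
            have h3 : r ^ p * (t ^ l - (u ^ l + β * (t - u))) ≤ 0 :=
              mul_nonpos_iff.mpr (Or.inl ⟨hrp.le, h2⟩)
            have h4 : f r - g r ≤ 0 := by linarith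
            have h5 := mul_nonneg (neg_nonneg.2 h3) (neg_nonneg.2 h4)
            rw [neg_mul_neg] at h5; exact h5
      · -- S unbounded above
        set a := sInf S
        refine core_finish (α := a ^ (m - p)) (β := 0) hfp hfq hfm (hgint p hp)
          (hgint q hq) (hgint m hm0) hEp hEq ?_
        intro r hr
        have hr0 : (0:ℝ) < r := hr
        have hrm : r ^ m = r ^ p * r ^ (m - p) := by
          rw [← Real.rpow_add hr0]; congr 1; ring
        have hrp : (0:ℝ) < r ^ p := Real.rpow_pos_of_pos hr0 _
        rcases lt_trichotomy (g r) (f r) with hlt | heq | hgt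
        · have hrS : r ∈ S := ⟨hr0, hlt⟩
          have har : a ≤ r := csInf_le hbd hrS
          have h1 : a ^ (m - p) ≤ r ^ (m - p) := Real.rpow_le_rpow ha0 har (by linarith)
          have : r ^ m - a ^ (m - p) * r ^ p - 0 * r ^ q = r ^ p * (r ^ (m-p) - a ^ (m-p)) := by
            rw [hrm]; ring
          rw [this]
          exact mul_nonneg (mul_nonneg hrp.le (by linarith)) (by linarith)
        · rw [show f r - g r = 0 by rw [heq]; ring, mul_zero]
        · have hra : r ≤ a := by
            by_contra hcon
            push_neg at hcon
            obtain ⟨x, hxS, hxr⟩ := exists_lt_of_csInf_lt hS hcon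
            obtain ⟨y, hyS, hry⟩ := (not_bddAbove_iff.mp hbA) r
            exact absurd (hSconv x hxS y hyS r hxr.le hry.le).2 (not_lt.mpr hgt.le)
          have h1 : r ^ (m - p) ≤ a ^ (m - p) := Real.rpow_le_rpow hr0.le hra (by linarith)
          have heq2 : r ^ m - a ^ (m - p) * r ^ p - 0 * r ^ q
              = r ^ p * (r ^ (m-p) - a ^ (m-p)) := by rw [hrm]; ring
          rw [heq2]
          have h3 : r ^ p * (r ^ (m-p) - a ^ (m-p)) ≤ 0 :=
            mul_nonpos_iff.mpr (Or.inl ⟨hrp.le, by linarith⟩)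
          have h4 : f r - g r ≤ 0 := by linarith
          have h5 := mul_nonneg (neg_nonneg.2 h3) (neg_nonneg.2 h4)
          rw [neg_mul_neg] at h5; exact h5
    · -- S empty
      refine core_finish_ae (p := p) hfp (hgint p hp) hEp ?_
      filter_upwards [ae_restrict_mem measurableSet_Ioi] with r hr
      by_contra hcon
      push_neg at hcon
      exact hS ⟨r, hr, hcon⟩
  -- conclude
  have hfinal : A' ^ (1 - l) * B' ^ l * Real.Gamma (m + 1)
      = ∫ r in Set.Ioi (0:ℝ), r ^ m * g r := by
    rw [hgval m hm0, ← hkey3]; ring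
  rw [← hfinal] at hcore
  rw [le_div_iff₀ hΓm]
  exact hcore


/-- Borell's lemma: if `f : ℝ₊ → ℝ₊` is log-concave, then
`Ψ_f(p) = (∫₀^∞ r^p f(r) dr) / Γ(p+1)` is log-concave on `[0, ∞)`. -/
theorem psi_logConcave (f : ℝ → ℝ) (hm : Measurable f) (hf0 : ∀ r, 0 ≤ r → 0 ≤ f r)
    (hlc : ∀ x y : ℝ, 0 ≤ x → 0 ≤ y → ∀ l ∈ Set.Ioo (0 : ℝ) 1,
      f x ^ (1 - l) * f y ^ l ≤ f ((1 - l) * x + l * y)) :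
    ∀ p q : ℝ, 0 ≤ p → 0 ≤ q → ∀ l ∈ Set.Ioo (0 : ℝ) 1,
      ((∫ r in Set.Ioi (0 : ℝ), r ^ p * f r) / Real.Gamma (p + 1)) ^ (1 - l) *
          ((∫ r in Set.Ioi (0 : ℝ), r ^ q * f r) / Real.Gamma (q + 1)) ^ l ≤
        (∫ r in Set.Ioi (0 : ℝ), r ^ ((1 - l) * p + l * q) * f r) /
          Real.Gamma ((1 - l) * p + l * q + 1) := by
  intro p q hp hq l hl
  obtain ⟨hl0, hl1⟩ := hl
  have nn : ∀ s : ℝ, 0 ≤ ∫ r in Set.Ioi (0:ℝ), r ^ s * f r := fun s =>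
    setIntegral_nonneg measurableSet_Ioi fun r hr =>
      mul_nonneg (Real.rpow_pos_of_pos hr s).le (hf0 r (le_of_lt hr))
  have hm1 : 0 ≤ (1 - l) * p + l * q := by nlinarith
  have hRHS : 0 ≤ (∫ r in Set.Ioi (0 : ℝ), r ^ ((1 - l) * p + l * q) * f r) /
      Real.Gamma ((1 - l) * p + l * q + 1) :=
    div_nonneg (nn _) (Real.Gamma_nonneg_of_nonneg (by linarith))
  rcases eq_or_lt_of_le (nn p) with hA0 | hA
  · rw [← hA0, zero_div, Real.zero_rpow (by linarith : (1:ℝ) - l ≠ 0), zero_mul]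
    exact hRHS
  rcases eq_or_lt_of_le (nn q) with hB0 | hB
  · rw [← hB0, zero_div, Real.zero_rpow (by linarith : l ≠ 0), mul_zero]
    exact hRHS
  rcases lt_trichotomy p q with hpq | rfl | hqp
  · exact key f hm hf0 hlc hp hpq hl0 hl1 hA hB
  · have e : (1 - l) * p + l * p = p := by ring
    rw [e]
    have hX : 0 < (∫ r in Set.Ioi (0:ℝ), r ^ p * f r) / Real.Gamma (p + 1) :=
      div_pos hA (Real.Gamma_pos_of_pos (by linarith))
    rw [← Real.rpow_add hX, show (1 - l) + l = (1:ℝ) by ring, Real.rpow_one]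
  · have h := key f hm hf0 hlc hq hqp (by linarith : (0:ℝ) < 1 - l) (by linarith) hB hA
    have e1 : 1 - (1 - l) = l := by ring
    rw [e1] at h
    have e2 : l * q + (1 - l) * p = (1 - l) * p + l * q := by ring
    rw [e2] at h
    rw [mul_comm] at h
    exact h
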